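/- Inverse expansion of the elementary symmetric functions: in the polynomial ring R[x_1,…,x_n] over any commutative ring R, for all t, a ∈ R and every 0 ≤ p ≤ n, e_p = Σ_{i=0}^{p} f̃_i · [n−p+i choose i]_t · W_{p−i}. -/

import Mathlib

noncomputable section
namespace ASC

/-- Gaussian binomial coefficient `[m choose i]_t`, defined by `[m choose 0]_t = 1`,
`[m choose i]_t = 0` for `i > m`, and the Pascal rule
`[m choose i]_t = [m−1 choose i]_t + t^{m−i}·[m−1 choose i−1]_t`. -/
def gbinom {R : Type*} [CommRing R] (t : R) : ℕ → ℕ → R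
  | _, 0 => 1
  | 0, _ + 1 => 0
  | m + 1, i + 1 => gbinom t m (i + 1) + t ^ (m - i) * gbinom t m i

/-- The sequence `f_i`: `f_0 = 1`, `f_1 = −(1+a)`,
`f_i = −(1+a)·f_{i−1} + a·(t^{i−1}−1)·f_{i−2}`. -/
def fseq {R : Type*} [CommRing R] (a t : R) : ℕ → R
  | 0 => 1
  | 1 => -(1 + a)
  | i + 2 => -(1 + a) * fseq a t (i + 1) + a * (t ^ (i + 1) - 1) * fseq a t i

/-- The sequence `f̃_i`: `f̃_0 = 1`, `f̃_1 = 1+a`,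
`f̃_i = (1+a)·t^{i−1}·f̃_{i−1} + a·t^{i−2}·(1−t^{i−1})·f̃_{i−2}`. -/
def ftseq {R : Type*} [CommRing R] (a t : R) : ℕ → R
  | 0 => 1
  | 1 => 1 + a
  | i + 2 => (1 + a) * t ^ (i + 1) * ftseq a t (i + 1) + a * t ^ i * (1 - t ^ (i + 1)) * ftseq a t i

/-- The multivariable Al-Salam–Carlitz polynomial
`W_p = U^{(a)}_{(1^p)} = ∑_{i=0}^p f_i·[n−p+i choose i]_t·e_{p−i}`. -/
def Wpoly {R : Type*} [CommRing R] (n : ℕ) (t a : R) (p : ℕ) : MvPolynomial (Fin n) R :=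
  ∑ i ∈ Finset.range (p + 1),
    MvPolynomial.C (fseq a t i * gbinom t (n - p + i) i) * MvPolynomial.esymm (Fin n) R (p - i)

section Aux
variable {R : Type*} [CommRing R] (t a : R)

@[simp] lemma gbinom_zero_right (m : ℕ) : gbinom t m 0 = 1 := by cases m <;> rfl

lemma gbinom_succ_succ (m i : ℕ) :
    gbinom t (m+1) (i+1) = gbinom t m (i+1) + t ^ (m - i) * gbinom t m i := rfl

lemma gbinom_eq_zero : ∀ {m i : ℕ}, m < i → gbinom t m i = 0 := by
  intro m
  induction m with
  | zero => intro i h; match i, h with | i+1, _ => rfl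
  | succ m ih =>
    intro i h
    match i, h with
    | i+1, h =>
      rw [gbinom_succ_succ, ih (by omega), ih (by omega)]
      ring

@[simp] lemma gbinom_self : ∀ k : ℕ, gbinom t k k = 1 := by
  intro k
  induction k with
  | zero => rfl
  | succ k ih =>
    rw [gbinom_succ_succ, ih, gbinom_eq_zero t (Nat.lt_succ_self k), Nat.sub_self]
    ring

/-- The `q`-absorption identity `(1 - t^{k-s})·[k,s] = (1 - t^{s+1})·[k,s+1]`. -/
lemma gbinom_absorb : ∀ k s : ℕ,
    (1 - t ^ (k - s)) * gbinom t k s = (1 - t ^ (s+1)) * gbinom t k (s+1) := by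
  intro k
  induction k with
  | zero =>
    intro s
    rw [gbinom_eq_zero t (Nat.succ_pos s)]
    cases s with
    | zero => simp
    | succ s => rw [gbinom_eq_zero t (Nat.succ_pos s)]; ring
  | succ k ih =>
    intro s
    cases s with
    | zero =>
      have h1 := ih 0
      simp only [Nat.sub_zero, gbinom_zero_right, mul_one] at h1 ⊢
      rw [gbinom_succ_succ]
      simp only [Nat.sub_zero, gbinom_zero_right, mul_one]
      rw [mul_add, ← h1, pow_succ]
      ring
    | succ s =>
      rcases lt_or_ge s k with hs | hs
      · have e1 : k + 1 - (s + 1) = k - s := by omega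
        rw [gbinom_succ_succ, gbinom_succ_succ, e1]
        have h1 := ih (s+1)
        have h2 := ih s
        have hpow : t ^ (k - (s+1)) * t ^ (s+1+1) = t ^ (k - s) * t ^ (s+1) := by
          rw [← pow_add, ← pow_add]; congr 1; omega
        linear_combination h1 + t ^ (k - s) * h2 + gbinom t k (s+1) * hpow
      · rcases eq_or_lt_of_le hs with heq | hlt
        · subst heq
          rw [Nat.sub_self, pow_zero, gbinom_eq_zero t (show k + 1 < k + 1 + 1 by omega)]
          ring
        · rw [gbinom_eq_zero t (show k + 1 < s + 1 by omega),
            gbinom_eq_zero t (show k + 1 < s + 1 + 1 by omega)]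
          ring

/-- The "subset of a subset" identity `[m,k]·[k,s] = [m,s]·[m−s,k−s]`. -/
lemma gbinom_mul : ∀ m k s : ℕ, s ≤ k → k ≤ m →
    gbinom t m k * gbinom t k s = gbinom t m s * gbinom t (m - s) (k - s) := by
  intro m
  induction m with
  | zero => intro k s h1 h2; interval_cases k <;> interval_cases s <;> simp
  | succ m ih =>
    intro k s h1 h2
    cases s with
    | zero => simp
    | succ s =>
      cases k with
      | zero => omega
      | succ k =>
        rcases eq_or_lt_of_le h2 with heq | hlt
        · have : k = m := by omega
          subst this
          simp [Nat.sub_self, gbinom_eq_zero]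
        · have hkm : k + 1 ≤ m := by omega
          have hsk : s ≤ k := by omega
          have e1 : m + 1 - (s + 1) = m - s := by omega
          have e2 : k + 1 - (s + 1) = k - s := by omega
          rw [gbinom_succ_succ t m k, gbinom_succ_succ t k s, gbinom_succ_succ t m s, e1, e2]
          rcases Nat.eq_or_lt_of_le hsk with hes | hks
          · subst hes
            rw [Nat.sub_self, gbinom_zero_right, gbinom_eq_zero t (Nat.lt_succ_self s),
              gbinom_self]
            ring
          · have hms : s < m := by omega
            have e3 : m - s = (m - 1 - s) + 1 := by omega
            have e4 : k - s = (k - 1 - s) + 1 := by omega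
            have hP : gbinom t (m - s) (k - s)
                = gbinom t (m - 1 - s) (k - s) + t ^ (m - k) * gbinom t (m - 1 - s) (k - 1 - s) := by
              rw [e3, e4, gbinom_succ_succ]
              have e5 : m - 1 - s - (k - 1 - s) = m - k := by omega
              rw [e5, ← e4]
            have ih1 := ih (k+1) (s+1) (by omega) hkm
            have ih2 := ih k (s+1) (by omega) (by omega)
            have ih3 := ih k s hsk (by omega)
            rw [gbinom_succ_succ t k s, e2] at ih1
            rw [show m - (s+1) = m - 1 - s by omega] at ih1 ih2
            rw [show k - (s+1) = k - 1 - s by omega] at ih2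
            have e9 : t ^ (m - s) = t ^ (k - s) * t ^ (m - k) := by
              rw [← pow_add]; congr 1; omega
            rw [hP] at ih3 ⊢
            rw [e9]
            linear_combination ih1 + t ^ (m - k) * ih2 + t ^ (m - k) * t ^ (k - s) * ih3

@[simp] lemma fseq_zero : fseq a t 0 = 1 := rfl
@[simp] lemma ftseq_zero : ftseq a t 0 = 1 := rfl

lemma fseq_succ (s : ℕ) :
    fseq a t (s+1) = -(1+a) * fseq a t s + a * (t^s - 1) * fseq a t (s-1) := by
  cases s with
  | zero => show -(1+a) = _; simp [fseq]
  | succ s => rfl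

lemma ftseq_succ (u : ℕ) :
    ftseq a t (u+1) = (1+a) * t^u * ftseq a t u + a * t^(u-1) * (1 - t^u) * ftseq a t (u-1) := by
  cases u with
  | zero => show 1+a = _; simp [ftseq]
  | succ u => rfl

/-- The key orthogonality: `∑_{s=0}^{k} [k,s]·f_s·f̃_{k−s} = 0` for `k ≥ 1`. -/
lemma Ckey (k : ℕ) :
    ∑ s ∈ Finset.range (k+2), gbinom t (k+1) s * (fseq a t s * ftseq a t (k+1-s)) = 0 := by
  have split1 : ∑ s ∈ Finset.range (k+2), gbinom t (k+1) s * (fseq a t s * ftseq a t (k+1-s))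
      = (∑ s ∈ Finset.range (k+1), gbinom t k s * (fseq a t s * ftseq a t (k-s+1)))
        + (∑ s ∈ Finset.range (k+1), t^(k-s) * gbinom t k s * (fseq a t (s+1) * ftseq a t (k-s))) := by
    have h2 : ∑ s ∈ Finset.range (k+2), gbinom t k s * (fseq a t s * ftseq a t (k+1-s))
        = ∑ s ∈ Finset.range (k+1), gbinom t k s * (fseq a t s * ftseq a t (k-s+1)) := by
      rw [Finset.sum_range_succ, gbinom_eq_zero t (Nat.lt_succ_self k), zero_mul, add_zero]
      refine Finset.sum_congr rfl fun s hs => ?_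
      rw [Finset.mem_range] at hs
      rw [show k + 1 - s = k - s + 1 by omega]
    have h3 : ∑ s ∈ Finset.range (k+2),
          (gbinom t (k+1) s - gbinom t k s) * (fseq a t s * ftseq a t (k+1-s))
        = ∑ s ∈ Finset.range (k+1), t^(k-s) * gbinom t k s * (fseq a t (s+1) * ftseq a t (k-s)) := by
      rw [Finset.sum_range_succ']
      simp only [gbinom_zero_right, sub_self, zero_mul, add_zero]
      refine Finset.sum_congr rfl fun s hs => ?_
      rw [Finset.mem_range] at hs
      rw [gbinom_succ_succ, show k + 1 - (s+1) = k - s by omega]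
      ring
    calc ∑ s ∈ Finset.range (k+2), gbinom t (k+1) s * (fseq a t s * ftseq a t (k+1-s))
        = (∑ s ∈ Finset.range (k+2), gbinom t k s * (fseq a t s * ftseq a t (k+1-s)))
          + ∑ s ∈ Finset.range (k+2),
              (gbinom t (k+1) s - gbinom t k s) * (fseq a t s * ftseq a t (k+1-s)) := by
          rw [← Finset.sum_add_distrib]
          refine Finset.sum_congr rfl fun s _ => by ring
      _ = _ := by rw [h2, h3]
  rw [split1]
  have hA : ∑ s ∈ Finset.range (k+1), gbinom t k s * (fseq a t s * ftseq a t (k-s+1))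
      = (1+a) * (∑ s ∈ Finset.range (k+1), gbinom t k s * t^(k-s) * (fseq a t s * ftseq a t (k-s)))
        + a * ∑ s ∈ Finset.range (k+1),
            gbinom t k s * t^(k-s-1) * (1 - t^(k-s)) * (fseq a t s * ftseq a t (k-s-1)) := by
    rw [Finset.mul_sum, Finset.mul_sum, ← Finset.sum_add_distrib]
    refine Finset.sum_congr rfl fun s _ => ?_
    rw [ftseq_succ]
    ring
  have hB : ∑ s ∈ Finset.range (k+1), t^(k-s) * gbinom t k s * (fseq a t (s+1) * ftseq a t (k-s))
      = -((1+a) * (∑ s ∈ Finset.range (k+1), gbinom t k s * t^(k-s) * (fseq a t s * ftseq a t (k-s))))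
        + a * ∑ s ∈ Finset.range (k+1),
            t^(k-s) * gbinom t k s * (t^s - 1) * (fseq a t (s-1) * ftseq a t (k-s)) := by
    rw [neg_mul_eq_neg_mul, Finset.mul_sum, Finset.mul_sum, ← Finset.sum_add_distrib]
    refine Finset.sum_congr rfl fun s _ => ?_
    rw [fseq_succ]
    ring
  rw [hA, hB]
  have hD : (∑ s ∈ Finset.range (k+1),
        gbinom t k s * t^(k-s-1) * (1 - t^(k-s)) * (fseq a t s * ftseq a t (k-s-1)))
      + (∑ s ∈ Finset.range (k+1),
        t^(k-s) * gbinom t k s * (t^s - 1) * (fseq a t (s-1) * ftseq a t (k-s))) = 0 := by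
    have hD1 : ∑ s ∈ Finset.range (k+1),
          gbinom t k s * t^(k-s-1) * (1 - t^(k-s)) * (fseq a t s * ftseq a t (k-s-1))
        = ∑ s ∈ Finset.range k,
          gbinom t k s * t^(k-s-1) * (1 - t^(k-s)) * (fseq a t s * ftseq a t (k-s-1)) := by
      rw [Finset.sum_range_succ, Nat.sub_self, pow_zero, sub_self, mul_zero, zero_mul, add_zero]
    have hD2 : ∑ s ∈ Finset.range (k+1),
          t^(k-s) * gbinom t k s * (t^s - 1) * (fseq a t (s-1) * ftseq a t (k-s))
        = ∑ s ∈ Finset.range k,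
          t^(k-s-1) * gbinom t k (s+1) * (t^(s+1) - 1) * (fseq a t s * ftseq a t (k-s-1)) := by
      rw [Finset.sum_range_succ', pow_zero, sub_self, mul_zero, zero_mul, add_zero]
      refine Finset.sum_congr rfl fun s hs => ?_
      rw [Finset.mem_range] at hs
      rw [show k - (s+1) = k - s - 1 by omega, show s + 1 - 1 = s by omega]
    rw [hD1, hD2, ← Finset.sum_add_distrib]
    refine Finset.sum_eq_zero fun s hs => ?_
    rw [Finset.mem_range] at hs
    linear_combination (t^(k-s-1) * (fseq a t s * ftseq a t (k-s-1))) * gbinom_absorb t k s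
  linear_combination a * hD

lemma sum_triangle {M : Type*} [AddCommMonoid M] (p : ℕ) (F : ℕ → ℕ → M) :
    ∑ i ∈ Finset.range (p+1), ∑ j ∈ Finset.range (p - i + 1), F i j
      = ∑ k ∈ Finset.range (p+1), ∑ i ∈ Finset.range (k+1), F i (k - i) := by
  rw [Finset.sum_sigma', Finset.sum_sigma']
  refine Finset.sum_nbij' (fun x => ⟨x.1 + x.2, x.1⟩) (fun x => ⟨x.2, x.1 - x.2⟩) ?_ ?_ ?_ ?_ ?_
  · rintro ⟨i, j⟩ h
    simp only [Finset.mem_sigma, Finset.mem_range] at h ⊢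
    omega
  · rintro ⟨k, i⟩ h
    simp only [Finset.mem_sigma, Finset.mem_range] at h ⊢
    omega
  · rintro ⟨i, j⟩ h
    simp only [Finset.mem_sigma, Finset.mem_range] at h
    show (⟨i, i + j - i⟩ : Σ _ : ℕ, ℕ) = ⟨i, j⟩
    exact Sigma.ext rfl (heq_of_eq (show i + j - i = j by omega))
  · rintro ⟨k, i⟩ h
    simp only [Finset.mem_sigma, Finset.mem_range] at h
    show (⟨i + (k - i), i⟩ : Σ _ : ℕ, ℕ) = ⟨k, i⟩
    exact Sigma.ext (show i + (k - i) = k by omega) (heq_of_eq rfl)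
  · rintro ⟨i, j⟩ h
    simp only [Finset.mem_sigma, Finset.mem_range] at h
    simp only
    rw [show i + j - i = j by omega]

end Aux

/-- STATEMENT 15: inverse expansion of the elementary symmetric functions:
`e_p = ∑_{i=0}^p f̃_i·[n−p+i choose i]_t·W_{p−i}` for `0 ≤ p ≤ n`. -/
theorem statement15 {R : Type*} [CommRing R] (n : ℕ) (t a : R) (p : ℕ) (hp : p ≤ n) :
    MvPolynomial.esymm (Fin n) R p
      = ∑ i ∈ Finset.range (p + 1),
          MvPolynomial.C (ftseq a t i * gbinom t (n - p + i) i) * Wpoly n t a (p - i) := by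
  have key : ∀ k : ℕ, k ≤ p →
      (∑ i ∈ Finset.range (k+1),
        ftseq a t i * gbinom t (n - p + i) i * (fseq a t (k - i) * gbinom t (n - p + k) (k - i)))
      = if k = 0 then 1 else 0 := by
    intro k hk
    have hstep : ∀ i ∈ Finset.range (k+1),
        ftseq a t i * gbinom t (n - p + i) i * (fseq a t (k - i) * gbinom t (n - p + k) (k - i))
        = gbinom t (n - p + k) k *
            (gbinom t k (k - i) * (fseq a t (k - i) * ftseq a t (k - (k - i)))) := by
      intro i hi
      rw [Finset.mem_range] at hi
      have hmul := gbinom_mul t (n - p + k) k (k - i) (by omega) (by omega)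
      rw [show n - p + k - (k - i) = n - p + i by omega,
        show k - (k - i) = i from by omega] at hmul
      rw [show k - (k - i) = i from by omega]
      linear_combination (-(fseq a t (k - i) * ftseq a t i)) * hmul
    rw [Finset.sum_congr rfl hstep, ← Finset.mul_sum]
    have hrefl := Finset.sum_range_reflect
      (fun s => gbinom t k s * (fseq a t s * ftseq a t (k - s))) (k+1)
    simp only [Nat.add_sub_cancel] at hrefl
    rw [show (∑ i ∈ Finset.range (k+1),
          gbinom t k (k - i) * (fseq a t (k - i) * ftseq a t (k - (k - i))))
        = ∑ s ∈ Finset.range (k+1), gbinom t k s * (fseq a t s * ftseq a t (k - s)) from hrefl]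
    cases k with
    | zero => simp
    | succ k =>
      rw [show k + 1 + 1 = k + 2 from rfl,
        show (∑ s ∈ Finset.range (k+2), gbinom t (k+1) s * (fseq a t s * ftseq a t (k+1-s))) = 0
          from Ckey t a k, mul_zero]
      simp
  symm
  calc ∑ i ∈ Finset.range (p + 1),
        MvPolynomial.C (ftseq a t i * gbinom t (n - p + i) i) * Wpoly n t a (p - i)
      = ∑ i ∈ Finset.range (p + 1), ∑ j ∈ Finset.range (p - i + 1),
          MvPolynomial.C (ftseq a t i * gbinom t (n - p + i) i *
            (fseq a t j * gbinom t (n - (p - i) + j) j)) *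
            MvPolynomial.esymm (Fin n) R (p - i - j) := by
        refine Finset.sum_congr rfl fun i _ => ?_
        rw [Wpoly, Finset.mul_sum]
        refine Finset.sum_congr rfl fun j _ => ?_
        simp only [map_mul]
        ring
    _ = ∑ k ∈ Finset.range (p + 1), ∑ i ∈ Finset.range (k + 1),
          MvPolynomial.C (ftseq a t i * gbinom t (n - p + i) i *
            (fseq a t (k - i) * gbinom t (n - (p - i) + (k - i)) (k - i))) *
            MvPolynomial.esymm (Fin n) R (p - i - (k - i)) :=
        sum_triangle p (fun i j =>
          MvPolynomial.C (ftseq a t i * gbinom t (n - p + i) i *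
            (fseq a t j * gbinom t (n - (p - i) + j) j)) *
            MvPolynomial.esymm (Fin n) R (p - i - j))
    _ = ∑ k ∈ Finset.range (p + 1),
          MvPolynomial.C (∑ i ∈ Finset.range (k + 1),
            ftseq a t i * gbinom t (n - p + i) i *
              (fseq a t (k - i) * gbinom t (n - p + k) (k - i))) *
            MvPolynomial.esymm (Fin n) R (p - k) := by
        refine Finset.sum_congr rfl fun k hk => ?_
        rw [Finset.mem_range] at hk
        rw [map_sum, Finset.sum_mul]
        refine Finset.sum_congr rfl fun i hi => ?_
        rw [Finset.mem_range] at hi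
        rw [show n - (p - i) + (k - i) = n - p + k by omega,
          show p - i - (k - i) = p - k by omega]
    _ = MvPolynomial.esymm (Fin n) R p := by
        rw [Finset.sum_eq_single 0]
        · rw [key 0 (by omega)]
          simp
        · intro k hk hk0
          rw [Finset.mem_range] at hk
          rw [key k (by omega), if_neg hk0]
          simp
        · intro h
          exact absurd (Finset.mem_range.mpr (by omega)) h


end ASC
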